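/- Let X be a one-sided shift space, f ∈ C(X, ℕ), and X^f the subshift built from the tower X_f. Let X₀ = ι_{X_f}(X × {0}) ⊆ X^f. Then X₀ is a compact open subset of X^f which is a cross section: every point of X^f is of the form σ_{X^f}^k(x) with x ∈ X₀ and k ∈ ℕ₀; for every x ∈ X₀ there is k ∈ ℕ with σ_{X^f}^k(x) ∈ X₀; the first-return time function frt(x) = min{k ∈ ℕ : σ_{X^f}^k(x) ∈ X₀} is continuous on X₀ (and equals f(σ(π(x))) where π(ι_{X_f}(x,0)) = x); and the first-return map σ_{X₀}(x) = σ_{X^f}^{frt(x)}(x) makes (X₀, σ_{X₀}) conjugate to (X, σ_X) via x ↦ ι_{X_f}(x, 0). -/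

import Mathlib

/-- The one-sided shift map on `ℕ → A`. -/
def shift {A : Type*} (x : ℕ → A) : ℕ → A := fun n => x (n + 1)

/-- The tower `X_f` over `X`. -/
def XfSet {A : Type*} (X : Set (ℕ → A)) (f : (ℕ → A) → ℕ) : Set ((ℕ → A) × ℕ) :=
  {p | p.1 ∈ X ∧ p.2 < f p.1}

/-- The tower map `σ_{X_f}`. -/
def sigmaf {A : Type*} (f : (ℕ → A) → ℕ) (p : (ℕ → A) × ℕ) : (ℕ → A) × ℕ :=
  if p.2 = 0 then (shift p.1, f (shift p.1) - 1) else (p.1, p.2 - 1)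

/-- The itinerary embedding `ι_{X_f} : X_f → (A × ℕ)^{ℕ₀}`. -/
def iotaf {A : Type*} (f : (ℕ → A) → ℕ) (p : (ℕ → A) × ℕ) : ℕ → A × ℕ :=
  fun t => (((sigmaf f)^[t] p).1 0, ((sigmaf f)^[t] p).2)

/-- The subshift `X^f = ι_{X_f}(X_f)`. -/
def Xup {A : Type*} (X : Set (ℕ → A)) (f : (ℕ → A) → ℕ) : Set (ℕ → A × ℕ) :=
  iotaf f '' XfSet X f

/-- The cross section `X₀ = ι_{X_f}(X × {0}) ⊆ X^f`. -/
def Xzero {A : Type*} (X : Set (ℕ → A)) (f : (ℕ → A) → ℕ) : Set (ℕ → A × ℕ) :=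
  (fun x => iotaf f (x, 0)) '' X

/-- The first-return time to the cross section `X₀`. -/
noncomputable def frt {A : Type*} (X : Set (ℕ → A)) (f : (ℕ → A) → ℕ)
    (w : ℕ → A × ℕ) : ℕ :=
  sInf {k : ℕ | 0 < k ∧ shift^[k] w ∈ Xzero X f}

set_option linter.unusedSectionVars false

section helpers
variable {A : Type*}

lemma myIotaShift (f : (ℕ → A) → ℕ) (p : (ℕ → A) × ℕ) :
    shift (iotaf f p) = iotaf f (sigmaf f p) := by
  funext t
  simp [shift, iotaf, Function.iterate_succ_apply]

lemma myIotaShiftIter (f : (ℕ → A) → ℕ) (p : (ℕ → A) × ℕ) (k : ℕ) :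
    shift^[k] (iotaf f p) = iotaf f ((sigmaf f)^[k] p) := by
  induction k with
  | zero => rfl
  | succ k ih =>
      rw [Function.iterate_succ_apply', ih, myIotaShift,
        ← Function.iterate_succ_apply' (sigmaf f)]

lemma myShiftIterApply (x : ℕ → A) (n m : ℕ) : shift^[n] x m = x (m + n) := by
  induction n generalizing x with
  | zero => rfl
  | succ n ih =>
      rw [Function.iterate_succ_apply, ih]
      simp [shift]; ring_nf

lemma mySigmafIter (f : (ℕ → A) → ℕ) (x : ℕ → A) {k : ℕ}
    (hk1 : 1 ≤ k) (hk2 : k ≤ f (shift x)) :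
    (sigmaf f)^[k] (x, 0) = (shift x, f (shift x) - k) := by
  induction k with
  | zero => omega
  | succ k ih =>
      rcases Nat.eq_zero_or_pos k with h0 | hpos
      · subst h0; simp [sigmaf]
      · rw [Function.iterate_succ_apply', ih hpos (by omega)]
        have h : f (shift x) - k ≠ 0 := by omega
        simp only [sigmaf, h, if_false]
        refine Prod.ext rfl ?_
        simp; omega

lemma myMemShift {X : Set (ℕ → A)} (hinv : shift '' X = X) {x : ℕ → A} (hx : x ∈ X) :
    shift x ∈ X := hinv ▸ Set.mem_image_of_mem shift hx

lemma myMemShiftIter {X : Set (ℕ → A)} (hinv : shift '' X = X) {x : ℕ → A} (hx : x ∈ X)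
    (n : ℕ) : shift^[n] x ∈ X := by
  induction n with
  | zero => exact hx
  | succ n ih => rw [Function.iterate_succ_apply']; exact myMemShift hinv ih

lemma myFstIterMem {X : Set (ℕ → A)} (hinv : shift '' X = X) (f : (ℕ → A) → ℕ)
    {p : (ℕ → A) × ℕ} (hp : p.1 ∈ X) (k : ℕ) : ((sigmaf f)^[k] p).1 ∈ X := by
  induction k with
  | zero => exact hp
  | succ k ih =>
      rw [Function.iterate_succ_apply']
      unfold sigmaf
      split
      · exact myMemShift hinv ih
      · exact ih

lemma myIotaZero (f : (ℕ → A) → ℕ) (p : (ℕ → A) × ℕ) :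
    iotaf f p 0 = (p.1 0, p.2) := rfl

lemma myIotaOne (f : (ℕ → A) → ℕ) (x : ℕ → A) :
    iotaf f (x, 0) 1 = (shift x 0, f (shift x) - 1) := by
  simp [iotaf, sigmaf]

lemma myMemXzeroSnd {X : Set (ℕ → A)} {f : (ℕ → A) → ℕ} {w : ℕ → A × ℕ}
    (hw : w ∈ Xzero X f) : (w 0).2 = 0 := by
  obtain ⟨y, -, rfl⟩ := hw
  rfl

end helpers

section main
variable {A : Type*}

lemma mySigmafFull {X : Set (ℕ → A)} (hinv : shift '' X = X) (f : (ℕ → A) → ℕ)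
    (hfpos : ∀ x ∈ X, 0 < f x) {x : ℕ → A} (hx : x ∈ X) :
    (sigmaf f)^[f (shift x)] (x, 0) = (shift x, 0) := by
  have h := hfpos _ (myMemShift hinv hx)
  rw [mySigmafIter f x h le_rfl]
  simp

lemma myFrtEq {X : Set (ℕ → A)} (hinv : shift '' X = X) (f : (ℕ → A) → ℕ)
    (hfpos : ∀ x ∈ X, 0 < f x) {x : ℕ → A} (hx : x ∈ X) :
    frt X f (iotaf f (x, 0)) = f (shift x) := by
  have hsx : shift x ∈ X := myMemShift hinv hx
  have hpos := hfpos _ hsx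
  have hmem : f (shift x) ∈ {k : ℕ | 0 < k ∧ shift^[k] (iotaf f (x, 0)) ∈ Xzero X f} := by
    refine ⟨hpos, ?_⟩
    rw [myIotaShiftIter, mySigmafFull hinv f hfpos hx]
    exact ⟨shift x, hsx, rfl⟩
  refine le_antisymm (Nat.sInf_le hmem) (le_csInf ⟨_, hmem⟩ ?_)
  rintro k ⟨hk, hkmem⟩
  by_contra hlt
  push_neg at hlt
  have h2 := myMemXzeroSnd hkmem
  rw [myIotaShiftIter, mySigmafIter f x hk (le_of_lt hlt)] at h2
  simp [myIotaZero] at h2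
  omega

lemma myFrtShift {X : Set (ℕ → A)} (hinv : shift '' X = X) (f : (ℕ → A) → ℕ)
    (hfpos : ∀ x ∈ X, 0 < f x) {x : ℕ → A} (hx : x ∈ X) :
    shift^[frt X f (iotaf f (x, 0))] (iotaf f (x, 0)) = iotaf f (shift x, 0) := by
  rw [myFrtEq hinv f hfpos hx, myIotaShiftIter, mySigmafFull hinv f hfpos hx]

lemma myIotaInj {X : Set (ℕ → A)} (hinv : shift '' X = X) (f : (ℕ → A) → ℕ)
    (hfpos : ∀ x ∈ X, 0 < f x) :
    Set.InjOn (fun x => iotaf f (x, 0)) X := by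
  intro x hx y hy h
  simp only at h
  have H : ∀ n, iotaf f (shift^[n] x, 0) = iotaf f (shift^[n] y, 0) := by
    intro n
    induction n with
    | zero => exact h
    | succ n ih =>
        have hx' : shift^[n] x ∈ X := myMemShiftIter hinv hx n
        have hy' : shift^[n] y ∈ X := myMemShiftIter hinv hy n
        have h1 := congrFun ih 1
        rw [myIotaOne, myIotaOne] at h1
        have hfx := hfpos _ (myMemShift hinv hx')
        have hfy := hfpos _ (myMemShift hinv hy')
        have hfe : f (shift (shift^[n] x)) = f (shift (shift^[n] y)) := by
          have := congrArg Prod.snd h1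
          simp at this
          omega
        rw [Function.iterate_succ_apply', Function.iterate_succ_apply',
          ← mySigmafFull hinv f hfpos hx', ← mySigmafFull hinv f hfpos hy',
          ← myIotaShiftIter, ← myIotaShiftIter, ih, hfe]
  funext n
  have := congrFun (H n) 0
  rw [myIotaZero, myIotaZero] at this
  simp only [Prod.mk.injEq] at this
  have h0 := this.1
  rwa [myShiftIterApply, myShiftIterApply, Nat.zero_add] at h0

end main

section cont
variable {A : Type*} [Fintype A] [TopologicalSpace A] [DiscreteTopology A]

lemma mySigmafContOn {X : Set (ℕ → A)} (hinv : shift '' X = X)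
    {f : (ℕ → A) → ℕ} (hf : ContinuousOn f X) :
    ContinuousOn (sigmaf f) {p : (ℕ → A) × ℕ | p.1 ∈ X} := by
  have hshift : Continuous (shift (A := A)) :=
    continuous_pi fun n => continuous_apply (n + 1)
  intro p hp
  by_cases h0 : p.2 = 0
  · have hopen : IsOpen {q : (ℕ → A) × ℕ | q.2 = 0} :=
      (isOpen_discrete {0}).preimage continuous_snd
    have hg : ContinuousWithinAt (fun q : (ℕ → A) × ℕ =>
        ((shift q.1, f (shift q.1) - 1) : (ℕ → A) × ℕ)) {p | p.1 ∈ X} p := by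
      have hmap : Set.MapsTo (fun q : (ℕ → A) × ℕ => shift q.1)
          {p : (ℕ → A) × ℕ | p.1 ∈ X} X := fun q hq => myMemShift hinv hq
      have hc1 : ContinuousWithinAt (fun q : (ℕ → A) × ℕ => shift q.1)
          {p | p.1 ∈ X} p := ((hshift.comp continuous_fst).continuousWithinAt)
      exact hc1.prodMk ((continuous_of_discreteTopology (f := fun n : ℕ => n - 1)).continuousAt.comp_continuousWithinAt
        ((hf.comp (hshift.comp continuous_fst).continuousOn hmap) p hp))
    refine hg.congr_of_eventuallyEq ?_ (by simp [sigmaf, h0])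
    filter_upwards [nhdsWithin_le_nhds (hopen.mem_nhds h0)] with q hq
    simp [sigmaf, hq]
  · have hopen : IsOpen {q : (ℕ → A) × ℕ | ¬ q.2 = 0} :=
      (isOpen_discrete {n : ℕ | ¬ n = 0}).preimage continuous_snd
    have hg : ContinuousWithinAt (fun q : (ℕ → A) × ℕ =>
        ((q.1, q.2 - 1) : (ℕ → A) × ℕ)) {p | p.1 ∈ X} p :=
      (continuous_fst.prodMk ((continuous_of_discreteTopology (f := fun n : ℕ => n - 1)).comp continuous_snd)).continuousWithinAt
    refine hg.congr_of_eventuallyEq ?_ (by simp [sigmaf, h0])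
    filter_upwards [nhdsWithin_le_nhds (hopen.mem_nhds h0)] with q hq
    simp [sigmaf, hq]

lemma mySigmafIterContOn {X : Set (ℕ → A)} (hinv : shift '' X = X)
    {f : (ℕ → A) → ℕ} (hf : ContinuousOn f X) (t : ℕ) :
    ContinuousOn (fun x => (sigmaf f)^[t] (x, 0)) X := by
  induction t with
  | zero => exact (continuous_id.prodMk continuous_const).continuousOn
  | succ t ih =>
      have : (fun x => (sigmaf f)^[t + 1] (x, 0)) =
          (sigmaf f) ∘ (fun x => (sigmaf f)^[t] (x, 0)) := by
        funext x; exact Function.iterate_succ_apply' _ _ _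
      rw [this]
      exact (mySigmafContOn hinv hf).comp ih
        (fun x hx => myFstIterMem hinv f (by exact hx) t)

lemma myIotaContOn {X : Set (ℕ → A)} (hinv : shift '' X = X)
    {f : (ℕ → A) → ℕ} (hf : ContinuousOn f X) :
    ContinuousOn (fun x => iotaf f (x, 0)) X := by
  apply continuousOn_pi.2
  intro t
  have h := mySigmafIterContOn hinv hf t
  exact ((continuous_apply 0).comp continuous_fst).comp_continuousOn h |>.prodMk
    (continuous_snd.comp_continuousOn h)
end cont



/-- `X₀` is a compact open cross section of `X^f`: every point of `X^f` lies on
the forward orbit of `X₀`; points of `X₀` return to `X₀`; the first-return time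
is continuous on `X₀` and equals `f(σ_X(x))` at `ι(x,0)`; and the first-return
map on `X₀` is conjugate to `(X, σ_X)` via `x ↦ ι_{X_f}(x, 0)`. -/
theorem stmt19 {A : Type*} [Fintype A] [TopologicalSpace A] [DiscreteTopology A]
    (X : Set (ℕ → A)) (hcl : IsClosed X) (hinv : shift '' X = X)
    (f : (ℕ → A) → ℕ) (hf : ContinuousOn f X) (hfpos : ∀ x ∈ X, 0 < f x) :
    IsCompact (Xzero X f) ∧
    (∃ U : Set (ℕ → A × ℕ), IsOpen U ∧ Xzero X f = U ∩ Xup X f) ∧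
    (∀ z ∈ Xup X f, ∃ w ∈ Xzero X f, ∃ k : ℕ, shift^[k] w = z) ∧
    (∀ w ∈ Xzero X f, ∃ k : ℕ, 0 < k ∧ shift^[k] w ∈ Xzero X f) ∧
    ContinuousOn (frt X f) (Xzero X f) ∧
    (∀ x ∈ X, frt X f (iotaf f (x, 0)) = f (shift x)) ∧
    Set.InjOn (fun x => iotaf f (x, 0)) X ∧
    ContinuousOn (fun x => iotaf f (x, 0)) X ∧
    (∀ x ∈ X, shift^[frt X f (iotaf f (x, 0))] (iotaf f (x, 0))
      = iotaf f (shift x, 0)) := by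
  have hiotaCont := myIotaContOn hinv hf
  refine ⟨?_, ?_, ?_, ?_, ?_, ?_, myIotaInj hinv f hfpos, hiotaCont, ?_⟩
  · have hXcomp : IsCompact X := isCompact_univ.of_isClosed_subset hcl (Set.subset_univ X)
    exact hXcomp.image_of_continuousOn hiotaCont
  · refine ⟨{w : ℕ → A × ℕ | (w 0).2 = 0}, ?_, ?_⟩
    · show IsOpen ((fun w : ℕ → A × ℕ => (w 0).2) ⁻¹' {0})
      exact (isOpen_discrete ({0} : Set ℕ)).preimage (continuous_snd.comp (continuous_apply 0))
    · ext w
      constructor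
      · rintro ⟨x, hx, rfl⟩
        exact ⟨myMemXzeroSnd ⟨x, hx, rfl⟩, ⟨(x, 0), ⟨hx, hfpos x hx⟩, rfl⟩⟩
      · rintro ⟨hw0, ⟨⟨x, i⟩, ⟨hx, hi⟩, rfl⟩⟩
        have : i = 0 := hw0
        subst this
        exact ⟨x, hx, rfl⟩
  · rintro z ⟨⟨x, i⟩, ⟨hx, hi⟩, rfl⟩
    dsimp only at hx hi
    obtain ⟨y, hy, hyx⟩ : ∃ y ∈ X, shift y = x := by
      have : x ∈ shift '' X := hinv.symm ▸ hx
      obtain ⟨y, hy, hyx⟩ := this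
      exact ⟨y, hy, hyx⟩
    refine ⟨iotaf f (y, 0), ⟨y, hy, rfl⟩, f x - i, ?_⟩
    rw [myIotaShiftIter, mySigmafIter f y (by omega) (by rw [hyx]; omega), hyx]
    have he : f x - (f x - i) = i := by omega
    rw [he]
  · rintro w ⟨x, hx, rfl⟩
    refine ⟨f (shift x), hfpos _ (myMemShift hinv hx), ?_⟩
    rw [myIotaShiftIter, mySigmafFull hinv f hfpos hx]
    exact ⟨shift x, myMemShift hinv hx, rfl⟩
  · have hg : Continuous (fun w : ℕ → A × ℕ => (w 1).2 + 1) :=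
      continuous_of_discreteTopology.comp (continuous_snd.comp (continuous_apply 1))
    refine (hg.continuousOn).congr ?_
    rintro w ⟨x, hx, rfl⟩
    rw [myFrtEq hinv f hfpos hx]
    simp only [myIotaOne]
    have := hfpos _ (myMemShift hinv hx)
    omega
  · exact fun x hx => myFrtEq hinv f hfpos hx
  · exact fun x hx => myFrtShift hinv f hfpos hx
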